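/- For every n ≥ 1, every probability distribution p = (p_1, ..., p_n) with p_1 ≥ ... ≥ p_n > 0 and Σ p_i = 1, every α ∈ (0, 1/2], and every integer k ≥ 1, the guessing entropy satisfies E[G(p)] ≥ (1/e)·2^{H(p) + p_n·h(α)·(1-α^k)/(1-α)} + 1/2 - p_n·α·(1-α^k)/(1-α). -/

import Mathlib

/-- Shannon entropy in bits. -/
noncomputable def shannonEntropy {n : ℕ} (p : Fin n → ℝ) : ℝ :=
  -∑ i, p i * Real.logb 2 (p i)

/-- Guessing entropy: expected number of guesses (indices counted from 1). -/
noncomputable def guessingEntropy {n : ℕ} (p : Fin n → ℝ) : ℝ :=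
  ∑ i : Fin n, (((i : ℕ) : ℝ) + 1) * p i

/-- Binary entropy function (in bits). -/
noncomputable def binaryEntropy (α : ℝ) : ℝ :=
  -α * Real.logb 2 α - (1 - α) * Real.logb 2 (1 - α)

lemma rioul_base {m : ℕ} (q : Fin m → ℝ) (hq : ∀ i, 0 < q i)
    (hs : ∑ i, q i = 1) :
    guessingEntropy q ≥ Real.exp (-∑ i, q i * Real.log (q i)) / Real.exp 1 + 1/2 := by
  have hm : 0 < m := by
    rcases Nat.eq_zero_or_pos m with h | h
    · subst h; simp at hs
    · exact h
  have hne : (Finset.univ : Finset (Fin m)).Nonempty := by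
    simpa [Finset.univ_nonempty_iff] using Fin.pos_iff_nonempty.mp hm
  set G := guessingEntropy q with hGdef
  have hG1 : 1 ≤ G := by
    calc (1:ℝ) = ∑ i, q i := hs.symm
    _ ≤ ∑ i : Fin m, (((i:ℕ):ℝ) + 1) * q i := by
        refine Finset.sum_le_sum (fun i _ => ?_)
        have h1 : (1:ℝ) ≤ ((i:ℕ):ℝ) + 1 := by
          have := Nat.cast_nonneg (α := ℝ) (i:ℕ); linarith
        exact le_mul_of_one_le_left (hq i).le h1
    _ = G := rfl
  have hg : (0:ℝ) < G - 1/2 := by linarith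
  set g : ℝ := G - 1/2 with hgdef
  set l : ℝ := 1/g with hldef
  have hl : 0 < l := by positivity
  set r : ℝ := Real.exp (-l) with hrdef
  have hr0 : 0 < r := Real.exp_pos _
  have hr1 : r < 1 := by
    rw [hrdef, Real.exp_lt_one_iff]; linarith
  set X : ℝ := ∑ i : Fin m, r ^ ((i:ℕ)+1) with hXdef
  have hX0 : 0 < X := Finset.sum_pos (fun i _ => pow_pos hr0 _) hne
  set Hn : ℝ := -∑ i, q i * Real.log (q i) with hHndef
  -- Step A : Hn ≤ log X + l * G
  have stepA : Hn ≤ Real.log X + l * G := by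
    have h1 : ∑ i, q i * Real.log (r ^ ((i:ℕ)+1) / (X * q i)) ≤ 0 := by
      have hb : ∀ i : Fin m, q i * Real.log (r ^ ((i:ℕ)+1) / (X * q i))
          ≤ r ^ ((i:ℕ)+1) / X - q i := by
        intro i
        have ht : 0 < r ^ ((i:ℕ)+1) / (X * q i) :=
          div_pos (pow_pos hr0 _) (mul_pos hX0 (hq i))
        have hlog := Real.log_le_sub_one_of_pos ht
        have h2 : q i * Real.log (r ^ ((i:ℕ)+1) / (X * q i))
            ≤ q i * (r ^ ((i:ℕ)+1) / (X * q i) - 1) :=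
          mul_le_mul_of_nonneg_left hlog (hq i).le
        refine h2.trans_eq ?_
        rw [mul_sub, mul_one, div_mul_eq_div_div, mul_comm (q i),
          div_mul_cancel₀ _ (hq i).ne']
      calc ∑ i, q i * Real.log (r ^ ((i:ℕ)+1) / (X * q i))
          ≤ ∑ i : Fin m, (r ^ ((i:ℕ)+1) / X - q i) := Finset.sum_le_sum (fun i _ => hb i)
        _ = (∑ i : Fin m, r ^ ((i:ℕ)+1)) / X - ∑ i, q i := by
            rw [Finset.sum_sub_distrib, Finset.sum_div]
        _ = 0 := by rw [hs, ← hXdef, div_self hX0.ne']; ring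
    have h2 : ∑ i, q i * Real.log (r ^ ((i:ℕ)+1) / (X * q i))
        = -(l * G) - Real.log X + Hn := by
      have hterm : ∀ i : Fin m, q i * Real.log (r ^ ((i:ℕ)+1) / (X * q i))
          = -(l * ((((i:ℕ):ℝ)+1) * q i)) - Real.log X * q i - q i * Real.log (q i) := by
        intro i
        have hlog : Real.log (r ^ ((i:ℕ)+1) / (X * q i))
            = (((i:ℕ):ℝ)+1) * (-l) - (Real.log X + Real.log (q i)) := by
          rw [Real.log_div (by positivity) (mul_pos hX0 (hq i)).ne',
            Real.log_pow, Real.log_mul hX0.ne' (hq i).ne', hrdef, Real.log_exp]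
          push_cast
          ring
        rw [hlog]; ring
      rw [Finset.sum_congr rfl (fun i _ => hterm i), Finset.sum_sub_distrib,
        Finset.sum_sub_distrib]
      have e1 : ∑ x : Fin m, -(l * ((((x:ℕ):ℝ)+1) * q x)) = -(l * G) := by
        rw [Finset.sum_neg_distrib, ← Finset.mul_sum, hGdef]; rfl
      have e2 : ∑ x : Fin m, Real.log X * q x = Real.log X := by
        rw [← Finset.mul_sum, hs, mul_one]
      rw [e1, e2, hHndef]
      ring
    rw [h2] at h1
    linarith
  -- Step B : X ≤ g * exp (-(l/2))
  have stepB : X ≤ g * Real.exp (-(l/2)) := by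
    have hXr : X ≤ r / (1 - r) := by
      have hX : X = r * ∑ i ∈ Finset.range m, r ^ i := by
        rw [hXdef, ← Fin.sum_univ_eq_sum_range (fun i => r ^ i), Finset.mul_sum]
        exact Finset.sum_congr rfl (fun i _ => by rw [pow_succ, mul_comm])
      rw [hX, geom_sum_eq hr1.ne m]
      have e3 : (r ^ m - 1) / (r - 1) = (1 - r ^ m) / (1 - r) := by
        rw [← neg_div_neg_eq]; ring_nf
      rw [e3, div_eq_mul_one_div r (1-r), mul_le_mul_iff_right₀ hr0,
        div_le_div_iff_of_pos_right (by linarith : (0:ℝ) < 1 - r)]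
      have : 0 ≤ r ^ m := by positivity
      linarith
    refine hXr.trans ?_
    have hsinh : l / 2 ≤ Real.sinh (l/2) := (Real.self_le_sinh_iff).mpr (by linarith)
    have hexp : l * Real.exp (l/2) ≤ Real.exp l - 1 := by
      have h1 : Real.exp l - 1 = Real.exp (l/2) * (2 * Real.sinh (l/2)) := by
        have e : Real.exp (l/2) * Real.exp (l/2) = Real.exp l := by
          rw [← Real.exp_add]; norm_num
        have he := (Real.exp_pos (l/2)).ne'
        rw [Real.sinh_eq, Real.exp_neg]
        field_simp
        linear_combination (-1) * e
      rw [h1]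
      have := Real.exp_pos (l/2)
      nlinarith
    have hexpl : Real.exp l = 1 / r := by
      rw [hrdef, Real.exp_neg, one_div, inv_inv]
    have hdenpos : 0 < Real.exp l - 1 := by
      have : 0 < l * Real.exp (l/2) := by positivity
      linarith
    have h1r : r / (1 - r) = 1 / (Real.exp l - 1) := by
      rw [hexpl] at hdenpos ⊢
      rw [div_eq_div_iff (by linarith) hdenpos.ne']
      field_simp
    rw [h1r]
    have step : 1 / (Real.exp l - 1) ≤ 1 / (l * Real.exp (l/2)) :=
      one_div_le_one_div_of_le (by positivity) hexp
    refine step.trans_eq ?_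
    rw [one_div, mul_inv, ← Real.exp_neg, ← one_div, hldef]
    rw [one_div_one_div]
  -- Step C and conclusion
  have hlg : l * g = 1 := by
    rw [hldef, one_div, inv_mul_cancel₀ hg.ne']
  have stepC : Hn ≤ Real.log g + 1 := by
    have hlogX : Real.log X ≤ Real.log g + (-(l/2)) := by
      calc Real.log X ≤ Real.log (g * Real.exp (-(l/2))) :=
            Real.log_le_log hX0 stepB
        _ = Real.log g + (-(l/2)) := by
            rw [Real.log_mul hg.ne' (Real.exp_pos _).ne', Real.log_exp]
    have : l * G - l/2 = 1 := by
      have : l * G - l/2 = l * (G - 1/2) := by ring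
      rw [this, ← hgdef, hlg]
    linarith
  have hfin : Real.exp Hn ≤ Real.exp 1 * g := by
    calc Real.exp Hn ≤ Real.exp (Real.log g + 1) := Real.exp_le_exp.mpr stepC
      _ = Real.exp 1 * g := by rw [Real.exp_add, Real.exp_log hg]; ring
  have he1 := Real.exp_pos 1
  have h2 : Real.exp Hn / Real.exp 1 ≤ g :=
    (div_le_iff₀ he1).mpr (by linarith)
  rw [ge_iff_le]
  have : g = G - 1/2 := hgdef
  linarith

lemma rioul_base2 {m : ℕ} (q : Fin m → ℝ) (hq : ∀ i, 0 < q i)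
    (hs : ∑ i, q i = 1) :
    guessingEntropy q ≥ (1 / Real.exp 1) * (2:ℝ) ^ (shannonEntropy q) + 1/2 := by
  have h2 : (2:ℝ) ^ (shannonEntropy q) = Real.exp (-∑ i, q i * Real.log (q i)) := by
    rw [Real.rpow_def_of_pos (by norm_num : (0:ℝ) < 2)]
    congr 1
    have hl2 : Real.log 2 ≠ 0 := (Real.log_pos one_lt_two).ne'
    rw [shannonEntropy, mul_neg, Finset.mul_sum]
    congr 1
    refine Finset.sum_congr rfl (fun i _ => ?_)
    rw [Real.logb]
    field_simp
  rw [h2, one_div, ← div_eq_inv_mul]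
  exact rioul_base q hq hs

lemma rioul_k (k : ℕ) (n : ℕ) (hn : 1 ≤ n) (p : Fin n → ℝ)
    (hpos : ∀ i, 0 < p i) (hsum : ∑ i, p i = 1)
    (α : ℝ) (hα0 : 0 < α) (hα : α ≤ 1/2) :
    guessingEntropy p ≥
      (1 / Real.exp 1) *
          (2 : ℝ) ^ (shannonEntropy p +
            p ⟨n - 1, by omega⟩ * binaryEntropy α * (1 - α ^ k) / (1 - α)) +
        1 / 2 - p ⟨n - 1, by omega⟩ * α * (1 - α ^ k) / (1 - α) := by
  induction k generalizing n p with
  | zero =>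
      simp only [pow_zero, sub_self, mul_zero, zero_mul, zero_div, mul_zero, add_zero,
        sub_zero]
      exact rioul_base2 p hpos hsum
  | succ k ih =>
      have h1α : 0 < 1 - α := by linarith
      set L : Fin n := ⟨n - 1, by omega⟩ with hLdef
      set m0 : ℝ := p L with hm0def
      have hm0 : 0 < m0 := hpos L
      set q : Fin (n+1) → ℝ := fun i =>
        if h : (i:ℕ) < n then (if (i:ℕ) = n-1 then (1-α) else 1) * p ⟨i, h⟩
        else α * m0 with hqdef
      have hq : ∀ i, 0 < q i := by
        intro i
        rw [hqdef]
        dsimp only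
        split_ifs with h1 h2
        · exact mul_pos h1α (hpos _)
        · exact mul_pos one_pos (hpos _)
        · exact mul_pos hα0 hm0
      have hqcast : ∀ i : Fin n,
          q (Fin.castSucc i) = (if (i:ℕ) = n-1 then (1-α) else 1) * p i := by
        intro i
        rw [hqdef]
        dsimp only
        rw [dif_pos (show ((Fin.castSucc i : Fin (n+1)):ℕ) < n from i.isLt)]
        simp only [Fin.coe_castSucc, Fin.eta]
      have hqlast : q (Fin.last n) = α * m0 := by
        rw [hqdef]
        dsimp only
        rw [dif_neg (by simp)]
      have hsingle : ∀ f : Fin n → ℝ,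
          ∑ i : Fin n, (if (i:ℕ) = n-1 then f i else 0) = f L := by
        intro f
        have hcong : ∀ i : Fin n, (if (i:ℕ) = n-1 then f i else 0)
            = (if i = L then f i else 0) := by
          intro i
          by_cases h : i = L
          · subst h
            rw [if_pos rfl, if_pos rfl]
          · rw [if_neg h, if_neg (fun hc => h (Fin.ext hc))]
        rw [Finset.sum_congr rfl (fun i _ => hcong i),
          Finset.sum_ite_eq' Finset.univ L f, if_pos (Finset.mem_univ L)]
      have hsum_q : ∑ i, q i = 1 := by
        rw [Fin.sum_univ_castSucc, hqlast,
          Finset.sum_congr rfl (fun i _ => hqcast i)]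
        have e1 : ∑ i : Fin n, (if (i:ℕ) = n-1 then (1-α) else 1) * p i
            = ∑ i : Fin n, (p i + (if (i:ℕ) = n-1 then -(α * p i) else 0)) := by
          refine Finset.sum_congr rfl (fun i _ => ?_)
          split_ifs <;> ring
        rw [e1, Finset.sum_add_distrib, hsum, hsingle (fun i => -(α * p i))]
        rw [← hm0def]
        ring
      have hG : guessingEntropy q = guessingEntropy p + α * m0 := by
        rw [guessingEntropy, Fin.sum_univ_castSucc, hqlast]
        have e1 : ∀ i : Fin n,
            (((Fin.castSucc i : Fin (n+1)):ℕ):ℝ) + 1 = ((i:ℕ):ℝ) + 1 := by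
          intro i; norm_num
        have e2 : ∑ i : Fin n, ((((Fin.castSucc i : Fin (n+1)):ℕ):ℝ) + 1) * q (Fin.castSucc i)
            = ∑ i : Fin n, ((((i:ℕ):ℝ) + 1) * p i
              + (if (i:ℕ) = n-1 then -(α * (((i:ℕ):ℝ)+1) * p i) else 0)) := by
          refine Finset.sum_congr rfl (fun i _ => ?_)
          rw [e1 i, hqcast i]
          split_ifs <;> ring
        rw [e2, Finset.sum_add_distrib, hsingle (fun i => -(α * (((i:ℕ):ℝ)+1) * p i))]
        have hLcast : (((L:ℕ):ℝ)) = (n:ℝ) - 1 := by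
          rw [hLdef]
          simp [Nat.cast_sub hn]
        have hlastcast : (((Fin.last n : Fin (n+1)):ℕ):ℝ) = (n:ℝ) := by simp
        rw [hlastcast, hLcast, ← hm0def, guessingEntropy]
        ring
      have hH : shannonEntropy q = shannonEntropy p + m0 * binaryEntropy α := by
        rw [shannonEntropy, Fin.sum_univ_castSucc, hqlast]
        have e2 : ∑ i : Fin n, q (Fin.castSucc i) * Real.logb 2 (q (Fin.castSucc i))
            = ∑ i : Fin n, (p i * Real.logb 2 (p i)
              + (if (i:ℕ) = n-1 then
                  ((1-α) * p i * (Real.logb 2 (1-α) + Real.logb 2 (p i))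
                    - p i * Real.logb 2 (p i)) else 0)) := by
          refine Finset.sum_congr rfl (fun i _ => ?_)
          rw [hqcast i]
          split_ifs with h
          · rw [Real.logb_mul h1α.ne' (hpos i).ne']
            ring
          · ring
        rw [e2, Finset.sum_add_distrib, hsingle, ← hm0def]
        rw [Real.logb_mul hα0.ne' hm0.ne']
        rw [shannonEntropy, binaryEntropy]
        ring
      -- apply IH to q
      have hih := ih (n+1) (by omega) q hq hsum_q
      have hqL : q ⟨(n+1) - 1, by omega⟩ = α * m0 := by
        have : (⟨(n+1) - 1, by omega⟩ : Fin (n+1)) = Fin.last n := by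
          apply Fin.ext; simp
        rw [this, hqlast]
      rw [hqL, hG, hH] at hih
      have eexp : shannonEntropy p + m0 * binaryEntropy α
            + α * m0 * binaryEntropy α * (1 - α ^ k) / (1 - α)
          = shannonEntropy p + m0 * binaryEntropy α * (1 - α ^ (k+1)) / (1 - α) := by
        field_simp
        ring
      have esub : α * m0 + α * m0 * α * (1 - α ^ k) / (1 - α)
          = m0 * α * (1 - α ^ (k+1)) / (1 - α) := by
        field_simp
        ring
      rw [show shannonEntropy p + m0 * binaryEntropy α
            + α * m0 * binaryEntropy α * (1 - α ^ k) / (1 - α)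
          = shannonEntropy p + m0 * binaryEntropy α * (1 - α ^ (k+1)) / (1 - α) from eexp] at hih
      show guessingEntropy p ≥
        (1 / Real.exp 1) * (2:ℝ) ^ (shannonEntropy p
          + m0 * binaryEntropy α * (1 - α ^ (k+1)) / (1 - α))
        + 1/2 - m0 * α * (1 - α ^ (k+1)) / (1 - α)
      linarith [hih, esub]

theorem refined_rioul_k_splits (n : ℕ) (hn : 1 ≤ n) (p : Fin n → ℝ)
    (hdesc : ∀ i j : Fin n, i ≤ j → p j ≤ p i)
    (hpos : ∀ i, 0 < p i)
    (hsum : ∑ i, p i = 1)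
    (α : ℝ) (hα0 : 0 < α) (hα : α ≤ 1/2)
    (k : ℕ) (hk : 1 ≤ k) :
    guessingEntropy p ≥
      (1 / Real.exp 1) *
          (2 : ℝ) ^ (shannonEntropy p +
            p ⟨n - 1, by omega⟩ * binaryEntropy α * (1 - α ^ k) / (1 - α)) +
        1 / 2 - p ⟨n - 1, by omega⟩ * α * (1 - α ^ k) / (1 - α) := by
  exact rioul_k k n hn p hpos hsum α hα0 hα
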